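/- Let P be a simple d-polytope in E^d with m facets. Then there exists ε_2 > 0 such that for every vertex v of P, {x ∈ Π_{v,ε_2} : σ_i(q(x)) ≥ 0 for all m−d+2 ≤ i ≤ m} ⊆ P ∪ C_v. -/

import Mathlib

noncomputable section

open Metric Set Finset Matrix
open scoped RealInnerProductSpace BigOperators Classical

namespace AverkovHenk

abbrev E (d : ℕ) := EuclideanSpace ℝ (Fin d)

/-- Support function `h(P,u)` of `P` in direction `u`. -/
def supp {d : ℕ} (P : Set (E d)) (u : E d) : ℝ :=
  sSup ((fun x => ⟪u, x⟫) '' P)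

/-- The normalized affine function `q_F` of the facet with outward unit normal `u`. -/
def qf {d : ℕ} (P : Set (E d)) (u : E d) (x : E d) : ℝ :=
  (supp P u - ⟪u, x⟫) / Metric.diam P

/-- The exposed face of `P` in direction `u`. -/
def faceOf {d : ℕ} (P : Set (E d)) (u : E d) : Set (E d) :=
  {x ∈ P | ⟪u, x⟫ = supp P u}

/-- `u` is an outward unit normal of a facet (a `(d-1)`-dimensional face) of `P`. -/
def IsFacetNormal {d : ℕ} (P : Set (E d)) (u : E d) : Prop :=
  ‖u‖ = 1 ∧ Module.finrank ℝ ↥(vectorSpan ℝ (faceOf P u)) = d - 1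

/-- The vertices of `P`, i.e. its extreme points. -/
def vertices {d : ℕ} (P : Set (E d)) : Set (E d) := Set.extremePoints ℝ P

/-- The `l`-th elementary symmetric function of `y_1, …, y_m`. -/
def esymm {m : ℕ} (y : Fin m → ℝ) (l : ℕ) : ℝ :=
  ∑ J ∈ Finset.powersetCard l (Finset.univ : Finset (Fin m)), ∏ j ∈ J, y j

/-- A presentation of a convex `d`-polytope `P ⊆ E^d` by the `m` outward unit normals
`u 0, …, u (m-1)` of its facets, together with the induced representation
`P = {x | q_j(x) ≥ 0 for all j}`. -/
structure FacetRep (d m : ℕ) where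
  P : Set (E d)
  u : Fin m → E d
  convex : Convex ℝ P
  compact : IsCompact P
  fulldim : (interior P).Nonempty
  inj : Function.Injective u
  facet : ∀ j, IsFacetNormal P (u j)
  complete : ∀ w : E d, IsFacetNormal P w → ∃ j, w = u j
  rep : P = {x | ∀ j, 0 ≤ qf P (u j) x}

namespace FacetRep

variable {d m : ℕ}

/-- The vector `q(x) = (q_1(x), …, q_m(x))`. -/
def q (R : FacetRep d m) (x : E d) : Fin m → ℝ := fun j => qf R.P (R.u j) x

/-- The indices of the facets containing the point `v`. -/
def act (R : FacetRep d m) (v : E d) : Finset (Fin m) :=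
  Finset.univ.filter fun j => R.q v j = 0

/-- The polytope is simple: each vertex lies on exactly `d` facets. -/
def Simple (R : FacetRep d m) : Prop :=
  ∀ v ∈ vertices R.P, (R.act v).card = d

/-- The enlarged polytope `P_ε`. -/
def Peps (R : FacetRep d m) (ε : ℝ) : Set (E d) := {x | ∀ j, -ε ≤ R.q x j}

/-- The box `Π_{v,ε} = {x : |q_v(x)|_∞ ≤ ε}`. -/
def Piv (R : FacetRep d m) (v : E d) (ε : ℝ) : Set (E d) :=
  {x | ∀ j ∈ R.act v, |R.q x j| ≤ ε}

/-- The cone `C_v = {x : -σ_1(q_v(x)) ≥ (2/3)|q_v(x)|}` (Euclidean norm). -/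
def Cv (R : FacetRep d m) (v : E d) : Set (E d) :=
  {x | (2/3) * Real.sqrt (∑ j ∈ R.act v, (R.q x j)^2) ≤ -(∑ j ∈ R.act v, R.q x j)}

/-- The polytope `P^v_{ε,δ}`. -/
def Pv (R : FacetRep d m) (v : E d) (ε δ : ℝ) : Set (E d) :=
  {x | (∀ j ∈ R.act v, -ε ≤ R.q x j) ∧ ∀ j ∉ R.act v, δ ≤ R.q x j}

/-- `γ = max{1 - q_F(v) : F a facet, v a vertex not on F}`. -/
def gam (R : FacetRep d m) : ℝ :=
  sSup {c | ∃ v ∈ vertices R.P, ∃ j, R.q v j ≠ 0 ∧ c = 1 - R.q v j}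

/-- The polynomial `f_k` built from weights `y_v` over the vertex set `V`. -/
def fk (R : FacetRep d m) (V : Finset (E d)) (y : ↥V → ℝ) (k : ℕ) (x : E d) : ℝ :=
  ∑ v : ↥V, y v * ((∑ j ∈ R.act v.1, (1 - R.q x j)^(2*k)) / (R.act v.1).card)^(2*k)

/-- The matrix `A_k` indexed by the vertex set `V`. -/
def Ak (R : FacetRep d m) (V : Finset (E d)) (k : ℕ) : Matrix ↥V ↥V ℝ :=
  Matrix.of fun w v : ↥V => ((∑ j ∈ R.act v.1, (1 - R.q w.1 j)^(2*k)) / (R.act v.1).card)^(2*k)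

/-- `deg(P)`: the maximal number of facets through a vertex. -/
def degP (R : FacetRep d m) (V : Finset (E d)) : ℕ := V.sup fun v => (R.act v).card

end FacetRep

/-- `|U_s^{-1}|_2` where `U_s` is the matrix with rows `u_j^T`, `j ∈ s`: the supremum of `‖x‖`
over the set where the Euclidean norm of `U_s x` is at most `1`. -/
def invNormU {d m : ℕ} (u : Fin m → E d) (s : Finset (Fin m)) : ℝ :=
  sSup {c | ∃ x : E d, Real.sqrt (∑ j ∈ s, (⟪u j, x⟫)^2) ≤ 1 ∧ c = ‖x‖}

/-- `α = max_{v ∈ vert(P)} |U_v^{-1}|_2`. -/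
def alpha {d m : ℕ} (R : FacetRep d m) (V : Finset (E d)) : ℝ :=
  sSup {a | ∃ v ∈ V, a = invNormU R.u (R.act v)}

/-- The normal cone `N(Q,x) = {u : ⟨x,u⟩ = h(Q,u)}`. -/
def normalCone {d : ℕ} (Q : Set (E d)) (x : E d) : Set (E d) :=
  {u | ⟪u, x⟫ = supp Q u}

/-- `S` is an edge (a 1-dimensional face) of `P`. -/
def IsEdgeOf {d : ℕ} (P S : Set (E d)) : Prop :=
  IsExposed ℝ P S ∧ Module.finrank ℝ ↥(vectorSpan ℝ S) = 1


section Aux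
open Polynomial

lemma pc1 {α : Type*} (A : Finset α) (y : α → ℝ) :
    ∑ J ∈ A.powersetCard 1, ∏ j ∈ J, y j = ∑ j ∈ A, y j := by
  rw [Finset.powersetCard_one, Finset.sum_map]
  simp

lemma sq_sum_pc2 {α : Type*} [DecidableEq α] (A : Finset α) (y : α → ℝ) :
    (∑ j ∈ A, y j) ^ 2
      = ∑ j ∈ A, (y j) ^ 2 + 2 * ∑ J ∈ A.powersetCard 2, ∏ j ∈ J, y j := by
  classical
  induction A using Finset.induction_on with
  | empty =>
    have h0 : (∅:Finset α).powersetCard 2 = ∅ := Finset.powersetCard_eq_empty.mpr (by simp)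
    simp [h0]
  | insert a A ha ih =>
    have hpc := Finset.powersetCard_succ_insert ha 1
    norm_num at hpc
    rw [Finset.sum_insert ha, Finset.sum_insert ha, hpc, Finset.sum_union]
    · have himg : ∑ J ∈ (A.powersetCard 1).image (insert a), ∏ j ∈ J, y j
          = y a * ∑ j ∈ A, y j := by
        rw [Finset.sum_image]
        · rw [← pc1 A y, Finset.mul_sum]
          refine Finset.sum_congr rfl fun J hJ => ?_
          have hJA : J ⊆ A := (Finset.mem_powersetCard.mp hJ).1
          have haJ : a ∉ J := fun h => ha (hJA h)
          rw [Finset.prod_insert haJ]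
        · intro s hs t ht hst
          have has : a ∉ s := fun h => ha ((Finset.mem_powersetCard.mp hs).1 h)
          have hat : a ∉ t := fun h => ha ((Finset.mem_powersetCard.mp ht).1 h)
          have := congrArg (Finset.erase · a) hst
          simpa [Finset.erase_insert, has, hat] using this
      rw [himg]
      linear_combination ih
    · rw [Finset.disjoint_left]
      intro J hJ hJimg
      obtain ⟨s, hs, rfl⟩ := Finset.mem_image.mp hJimg
      exact ha ((Finset.mem_powersetCard.mp hJ).1 (Finset.mem_insert_self a s))

lemma coeff_prod_esymm {m : ℕ} (y : Fin m → ℝ) (n : ℕ) (h : n ≤ m) :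
    (∏ j : Fin m, (X + C (y j))).coeff n = esymm y (m - n) := by
  have hcu : (Finset.univ : Finset (Fin m)).card = m := by simp
  rw [Finset.prod_X_add_C_coeff _ _ (by rw [hcu]; exact h)]
  unfold esymm
  rw [hcu]

lemma choose_le_two_pow (n k : ℕ) : n.choose k ≤ 2 ^ n := by
  rcases le_or_gt k n with h | h
  · calc n.choose k ≤ ∑ i ∈ Finset.range (n+1), n.choose i :=
        Finset.single_le_sum (f := fun i => n.choose i) (fun _ _ => Nat.zero_le _)
          (Finset.mem_range.mpr (by omega))
    _ = 2 ^ n := Nat.sum_range_choose n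
  · simp [Nat.choose_eq_zero_of_lt h]

set_option maxHeartbeats 1000000 in
lemma core {m d : ℕ} (hd : 2 ≤ d) (y : Fin m → ℝ) (A : Finset (Fin m))
    (hcard : A.card = d) (δ ε : ℝ) (hδ0 : 0 < δ) (hδ1 : δ ≤ 1/2)
    (hB : ∀ j, j ∉ A → δ ≤ y j ∧ y j ≤ 2)
    (hA : ∀ j ∈ A, |y j| ≤ ε)
    (hcond : ∀ i, m - d + 2 ≤ i → i ≤ m → 0 ≤ esymm y i)
    (hneg : ∃ j ∈ A, y j < 0)
    (hε1 : ε ≤ 1)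
    (hεM : ε * ((4:ℝ)^m / δ^m) * (d+1) ≤ 1)
    (hεC : ε * (2 * ((4:ℝ)^m / δ^m) * m * 2^m) ≤ 5/9) :
    (2/3) * Real.sqrt (∑ j ∈ A, (y j)^2) ≤ -(∑ j ∈ A, y j) := by
  classical
  set M : ℝ := (4:ℝ)^m / δ^m with hMdef
  have hMpos : 0 < M := by positivity
  have hδ1' : δ ≤ 1 := by linarith
  have hδm1 : δ ^ m ≤ 1 := pow_le_one₀ hδ0.le hδ1'
  have hdm : d ≤ m := by
    rw [← hcard]
    simpa using A.card_le_univ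
  have hAne : A.Nonempty := Finset.card_pos.mp (by omega)
  set ρ : ℝ := A.sup' hAne fun j => |y j| with hρdef
  have hρle : ∀ j ∈ A, |y j| ≤ ρ := by
    intro j hj
    rw [hρdef]
    exact Finset.le_sup' (fun j => |y j|) hj
  have hρε : ρ ≤ ε := Finset.sup'_le _ _ hA
  have hρ0 : 0 ≤ ρ := by
    obtain ⟨j1, hj1⟩ := hAne
    exact (abs_nonneg (y j1)).trans (hρle j1 hj1)
  have hρ1 : ρ ≤ 1 := hρε.trans hε1
  set gA : Polynomial ℝ := ∏ j ∈ A, (X + C (y j)) with hgA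
  set gB : Polynomial ℝ := ∏ j ∈ Aᶜ, (X + C (y j)) with hgB
  have hgAm : gA.Monic := monic_prod_of_monic _ _ fun j _ => monic_X_add_C _
  have hgBm : gB.Monic := monic_prod_of_monic _ _ fun j _ => monic_X_add_C _
  have hgAdeg : gA.natDegree = d := by
    rw [hgA, natDegree_prod_of_monic _ _ fun j _ => monic_X_add_C _]
    simp [hcard]
  have hgBdeg : gB.natDegree = Aᶜ.card := by
    rw [hgB, natDegree_prod_of_monic _ _ fun j _ => monic_X_add_C _]
    simp
  have hBmem : ∀ j ∈ Aᶜ, δ ≤ y j ∧ y j ≤ 2 := fun j hj => hB j (Finset.mem_compl.mp hj)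
  have hcardBle : Aᶜ.card ≤ m := by simpa using Aᶜ.card_le_univ
  -- facts about gB coefficients
  have hb0eval : gB.coeff 0 = ∏ j ∈ Aᶜ, y j := by
    rw [hgB, Polynomial.coeff_zero_eq_eval_zero]
    simp [Polynomial.eval_prod]
  have hb0low : δ ^ m ≤ gB.coeff 0 := by
    rw [hb0eval]
    calc δ ^ m ≤ δ ^ Aᶜ.card := pow_le_pow_of_le_one hδ0.le hδ1' hcardBle
    _ = ∏ _j ∈ Aᶜ, δ := by rw [Finset.prod_const]
    _ ≤ ∏ j ∈ Aᶜ, y j :=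
        Finset.prod_le_prod (fun j _ => hδ0.le) (fun j hj => (hBmem j hj).1)
  have hb0pos : 0 < gB.coeff 0 := lt_of_lt_of_le (by positivity) hb0low
  have hbnn : ∀ k, 0 ≤ gB.coeff k := by
    intro k
    rcases le_or_gt k Aᶜ.card with h | h
    · rw [hgB, Finset.prod_X_add_C_coeff _ _ h]
      refine Finset.sum_nonneg fun t ht => Finset.prod_nonneg fun j hj => ?_
      exact hδ0.le.trans (hBmem j ((Finset.mem_powersetCard.mp ht).1 hj)).1
    · rw [Polynomial.coeff_eq_zero_of_natDegree_lt (by rw [hgBdeg]; exact h)]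
  have hbup : ∀ k, gB.coeff k ≤ M * gB.coeff 0 := by
    intro k
    have hMb0 : (4:ℝ)^m ≤ M * gB.coeff 0 := by
      rw [hMdef, div_mul_eq_mul_div, le_div_iff₀ (by positivity)]
      exact mul_le_mul_of_nonneg_left hb0low (by positivity)
    rcases le_or_gt k Aᶜ.card with h | h
    · rw [hgB, Finset.prod_X_add_C_coeff _ _ h]
      refine le_trans ?_ hMb0
      have hterm : ∀ t ∈ Aᶜ.powersetCard (Aᶜ.card - k), ∏ j ∈ t, y j ≤ 2^m := by
        intro t ht
        have htsub : t ⊆ Aᶜ := (Finset.mem_powersetCard.mp ht).1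
        calc ∏ j ∈ t, y j ≤ ∏ _j ∈ t, (2:ℝ) :=
              Finset.prod_le_prod (fun j hj => hδ0.le.trans (hBmem j (htsub hj)).1)
                (fun j hj => (hBmem j (htsub hj)).2)
        _ = 2 ^ t.card := by rw [Finset.prod_const]
        _ ≤ 2 ^ m := pow_le_pow_right₀ one_le_two (by simpa using t.card_le_univ)
      calc (∑ t ∈ Aᶜ.powersetCard (Aᶜ.card - k), ∏ j ∈ t, y j)
          ≤ (Aᶜ.powersetCard (Aᶜ.card - k)).card • (2^m : ℝ) :=
            Finset.sum_le_card_nsmul _ _ _ hterm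
      _ = ((Aᶜ.card.choose (Aᶜ.card - k) : ℕ) : ℝ) * 2^m := by
            rw [Finset.card_powersetCard, nsmul_eq_mul]
      _ ≤ (2:ℝ)^m * 2^m := by
            have hch : (Aᶜ.card.choose (Aᶜ.card - k) : ℝ) ≤ (2:ℝ)^m := by
              have h1 : Aᶜ.card.choose (Aᶜ.card - k) ≤ 2 ^ Aᶜ.card := choose_le_two_pow _ _
              have h2 : (2:ℕ) ^ Aᶜ.card ≤ 2 ^ m := Nat.pow_le_pow_right (by norm_num) hcardBle
              calc (Aᶜ.card.choose (Aᶜ.card - k) : ℝ) ≤ ((2^m : ℕ) : ℝ) := by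
                    exact_mod_cast h1.trans h2
              _ = (2:ℝ)^m := by push_cast; ring
            exact mul_le_mul_of_nonneg_right hch (by positivity)
      _ = (4:ℝ)^m := by rw [← mul_pow]; norm_num
    · calc gB.coeff k = 0 := Polynomial.coeff_eq_zero_of_natDegree_lt (by rw [hgBdeg]; exact h)
      _ ≤ M * gB.coeff 0 := by positivity
  -- bounds on gA coefficients
  have haabs : ∀ i, i ≤ d → |gA.coeff i| ≤ 2^m * ρ^(d - i) := by
    intro i hi
    rw [hgA, Finset.prod_X_add_C_coeff _ _ (by rw [hcard]; exact hi), hcard]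
    calc |∑ t ∈ A.powersetCard (d - i), ∏ j ∈ t, y j|
        ≤ ∑ t ∈ A.powersetCard (d - i), |∏ j ∈ t, y j| := Finset.abs_sum_le_sum_abs _ _
    _ ≤ ∑ _t ∈ A.powersetCard (d - i), ρ^(d-i) := by
        refine Finset.sum_le_sum fun t ht => ?_
        rw [Finset.abs_prod]
        have htA := (Finset.mem_powersetCard.mp ht).1
        have htc := (Finset.mem_powersetCard.mp ht).2
        calc ∏ j ∈ t, |y j| ≤ ∏ _j ∈ t, ρ :=
              Finset.prod_le_prod (fun j _ => abs_nonneg _) (fun j hj => hρle j (htA hj))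
        _ = ρ ^ t.card := by rw [Finset.prod_const]
        _ = ρ ^ (d - i) := by rw [htc]
    _ = ((A.powersetCard (d-i)).card : ℝ) * ρ^(d-i) := by
        rw [Finset.sum_const, nsmul_eq_mul]
    _ ≤ 2^m * ρ^(d-i) := by
        refine mul_le_mul_of_nonneg_right ?_ (by positivity)
        rw [Finset.card_powersetCard, hcard]
        have h1 : d.choose (d - i) ≤ 2 ^ d := choose_le_two_pow _ _
        have h2 : (2:ℕ) ^ d ≤ 2 ^ m := Nat.pow_le_pow_right (by norm_num) hdm
        calc (d.choose (d-i) : ℝ) ≤ ((2^m : ℕ) : ℝ) := by exact_mod_cast h1.trans h2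
        _ = (2:ℝ)^m := by push_cast; ring
  -- the cascade inequality
  have hsplit : (∏ j : Fin m, (X + C (y j))) = gA * gB := (Finset.prod_mul_prod_compl A _).symm
  have hcas : ∀ n, n ≤ d - 2 →
      -(M * ∑ k ∈ Finset.range n, max (gA.coeff k) 0) ≤ gA.coeff n := by
    intro n hn
    have h0 : 0 ≤ (gA * gB).coeff n := by
      rw [← hsplit, coeff_prod_esymm y n (by omega)]
      exact hcond _ (by omega) (by omega)
    rw [Polynomial.coeff_mul, Finset.Nat.sum_antidiagonal_eq_sum_range_succ_mk,
      Finset.sum_range_succ] at h0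
    simp only [Nat.sub_self] at h0
    have hbound : ∑ k ∈ Finset.range n, gA.coeff k * gB.coeff (n - k)
        ≤ (∑ k ∈ Finset.range n, max (gA.coeff k) 0) * (M * gB.coeff 0) := by
      rw [Finset.sum_mul]
      refine Finset.sum_le_sum fun k _ => ?_
      calc gA.coeff k * gB.coeff (n-k) ≤ max (gA.coeff k) 0 * gB.coeff (n-k) :=
            mul_le_mul_of_nonneg_right (le_max_left _ _) (hbnn _)
      _ ≤ max (gA.coeff k) 0 * (M * gB.coeff 0) :=
            mul_le_mul_of_nonneg_left (hbup _) (le_max_right _ _)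
    have h3 : (-(M * ∑ k ∈ Finset.range n, max (gA.coeff k) 0)) * gB.coeff 0
        ≤ gA.coeff n * gB.coeff 0 := by
      have he : (-(M * ∑ k ∈ Finset.range n, max (gA.coeff k) 0)) * gB.coeff 0
          = -((∑ k ∈ Finset.range n, max (gA.coeff k) 0) * (M * gB.coeff 0)) := by ring
      rw [he]
      linarith
    exact le_of_mul_le_mul_right h3 hb0pos
  -- pick the negative coordinate
  obtain ⟨j0, hj0A, hj0neg⟩ := hneg
  set β : ℝ := -(y j0) with hβdef
  have hβpos : 0 < β := by simp [hβdef]; linarith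
  have hβρ : β ≤ ρ := by
    have := hρle j0 hj0A
    rwa [abs_of_neg hj0neg] at this
  have hβ1 : β ≤ 1 := hβρ.trans hρ1
  obtain ⟨e, rfl⟩ : ∃ e, d = e + 2 := ⟨d - 2, by omega⟩
  -- evaluation at β
  have heval0 : gA.eval β = 0 := by
    rw [hgA, Polynomial.eval_prod]
    refine Finset.prod_eq_zero hj0A ?_
    simp [hβdef]
  have hsum0 : ∑ i ∈ Finset.range (e+3), gA.coeff i * β^i = 0 := by
    rw [← Polynomial.eval_eq_sum_range' (by rw [hgAdeg]; omega)]
    exact heval0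
  set Q : ℝ := ∑ i ∈ Finset.range (e+1), max (gA.coeff i) 0 * β^i with hQdef
  have hQ0 : 0 ≤ Q := Finset.sum_nonneg fun i _ => by positivity
  have hSig : 0 ≤ ∑ i ∈ Finset.range (e+1), gA.coeff i * β^i := by
    have key : ∀ i ∈ Finset.range (e+1),
        max (gA.coeff i) 0 * β^i - M * β * Q ≤ gA.coeff i * β^i := by
      intro i hi
      have hi' : i ≤ e := by
        have := Finset.mem_range.mp hi; omega
      have hcasi := hcas i (by omega)
      have h1 : max (gA.coeff i) 0 - gA.coeff i ≤ M * ∑ k ∈ Finset.range i, max (gA.coeff k) 0 := by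
        rcases le_or_gt (gA.coeff i) 0 with h | h
        · rw [max_eq_right h]; linarith
        · rw [max_eq_left h.le]
          simp only [sub_self]
          positivity
      have h2 : (M * ∑ k ∈ Finset.range i, max (gA.coeff k) 0) * β^i ≤ M * β * Q := by
        have h3 : ∑ k ∈ Finset.range i, max (gA.coeff k) 0 * β^i
            ≤ ∑ k ∈ Finset.range i, max (gA.coeff k) 0 * β^k * β := by
          refine Finset.sum_le_sum fun k hk => ?_
          have hki : k < i := Finset.mem_range.mp hk
          have hpow : β^i ≤ β^(k+1) := pow_le_pow_of_le_one hβpos.le hβ1 (by omega)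
          calc max (gA.coeff k) 0 * β^i ≤ max (gA.coeff k) 0 * β^(k+1) :=
                mul_le_mul_of_nonneg_left hpow (le_max_right _ _)
          _ = max (gA.coeff k) 0 * β^k * β := by ring
        have h4 : ∑ k ∈ Finset.range i, max (gA.coeff k) 0 * β^k ≤ Q := by
          refine Finset.sum_le_sum_of_subset_of_nonneg
            (Finset.range_subset_range.mpr (by omega)) (fun k _ _ => by positivity)
        calc (M * ∑ k ∈ Finset.range i, max (gA.coeff k) 0) * β^i
            = M * ∑ k ∈ Finset.range i, max (gA.coeff k) 0 * β^i := by
              rw [mul_assoc, Finset.sum_mul]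
        _ ≤ M * ∑ k ∈ Finset.range i, max (gA.coeff k) 0 * β^k * β := by
              exact mul_le_mul_of_nonneg_left h3 hMpos.le
        _ = M * β * ∑ k ∈ Finset.range i, max (gA.coeff k) 0 * β^k := by
              rw [← Finset.sum_mul]; ring
        _ ≤ M * β * Q := by
              exact mul_le_mul_of_nonneg_left h4 (by positivity)
      have h5 : (max (gA.coeff i) 0 - gA.coeff i) * β^i ≤ M * β * Q := by
        calc (max (gA.coeff i) 0 - gA.coeff i) * β^i
            ≤ (M * ∑ k ∈ Finset.range i, max (gA.coeff k) 0) * β^i := by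
              refine mul_le_mul_of_nonneg_right h1 (by positivity)
        _ ≤ M * β * Q := h2
      rw [sub_mul] at h5
      linarith
    have hsumkey := Finset.sum_le_sum key
    have hconst : ∑ _i ∈ Finset.range (e+1), (M * β * Q) = (e+1 : ℝ) * (M * β * Q) := by
      rw [Finset.sum_const, Finset.card_range, nsmul_eq_mul]
      push_cast; ring
    rw [Finset.sum_sub_distrib, hconst, ← hQdef] at hsumkey
    have hsmall : (e+1:ℝ) * (M * β) ≤ 1 := by
      have h6 : (e+1:ℝ) ≤ (e:ℝ) + 3 := by linarith
      have h7 : β ≤ ε := hβρ.trans hρε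
      have hMβ0 : 0 ≤ M * β := mul_nonneg hMpos.le hβpos.le
      have h8 : (e+1:ℝ) * (M * β) ≤ ((e:ℝ)+3) * (M * ε) := by
        refine mul_le_mul h6 (mul_le_mul_of_nonneg_left h7 hMpos.le) hMβ0 (by positivity)
      have h10 : ((e:ℝ)+3) * (M * ε) ≤ 1 := by
        have h11 := hεM
        push_cast at h11
        nlinarith [h11]
      linarith
    nlinarith [hQ0, hsumkey, hsmall, hMpos, hβpos]
  have hlead : gA.coeff (e+2) = 1 := by
    have h := hgAm.coeff_natDegree
    rwa [hgAdeg] at h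
  have hTop : (∑ i ∈ Finset.range (e+1), gA.coeff i * β^i)
      + gA.coeff (e+1) * β^(e+1) + β^(e+2) = 0 := by
    have h := hsum0
    rw [Finset.sum_range_succ, Finset.sum_range_succ, hlead] at h
    linarith [h]
  have hσ1β : gA.coeff (e+1) ≤ -β := by
    have hβpow : (0:ℝ) < β^(e+1) := by positivity
    have h1 : gA.coeff (e+1) * β^(e+1) ≤ (-β) * β^(e+1) := by
      have h2 : (-β) * β^(e+1) = -(β^(e+2)) := by ring
      rw [h2]
      linarith
    exact le_of_mul_le_mul_right h1 hβpow
  have hnext : gA.coeff (e+1) = ∑ j ∈ A, y j := by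
    have h1 := Polynomial.Monic.nextCoeff_prod A (fun j => X + C (y j))
      (fun j _ => monic_X_add_C _)
    rw [← hgA] at h1
    simp only [Polynomial.nextCoeff_X_add_C] at h1
    rw [Polynomial.nextCoeff, hgAdeg] at h1
    simpa using h1
  -- lower bound on coeff e
  set c : ℝ := M * (m:ℝ) * 2^m with hcdef
  have hc0 : 0 ≤ c := by positivity
  have hs2 : -(c * ρ^3) ≤ gA.coeff e := by
    refine le_trans ?_ (hcas e (by omega))
    have hsum : ∑ k ∈ Finset.range e, max (gA.coeff k) 0 ≤ (m:ℝ) * (2^m * ρ^3) := by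
      have hstep : ∀ k ∈ Finset.range e, max (gA.coeff k) 0 ≤ 2^m * ρ^3 := by
        intro k hk
        have hk' : k < e := Finset.mem_range.mp hk
        have h1 := haabs k (by omega)
        have hexp : ρ^(e+2-k) ≤ ρ^3 := pow_le_pow_of_le_one hρ0 hρ1 (by omega)
        have h2 : max (gA.coeff k) 0 ≤ |gA.coeff k| := max_le (le_abs_self _) (abs_nonneg _)
        calc max (gA.coeff k) 0 ≤ 2^m * ρ^(e+2-k) := h2.trans h1
        _ ≤ 2^m * ρ^3 := mul_le_mul_of_nonneg_left hexp (by positivity)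
      calc ∑ k ∈ Finset.range e, max (gA.coeff k) 0
          ≤ (Finset.range e).card • (2^m * ρ^3 : ℝ) := Finset.sum_le_card_nsmul _ _ _ hstep
      _ = (e:ℝ) * (2^m * ρ^3) := by rw [Finset.card_range, nsmul_eq_mul]
      _ ≤ (m:ℝ) * (2^m * ρ^3) := by
          have : (e:ℝ) ≤ (m:ℝ) := by exact_mod_cast (by omega : e ≤ m)
          exact mul_le_mul_of_nonneg_right this (by positivity)
    have h7 : M * ∑ k ∈ Finset.range e, max (gA.coeff k) 0 ≤ c * ρ^3 := by
      calc M * ∑ k ∈ Finset.range e, max (gA.coeff k) 0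
          ≤ M * ((m:ℝ) * (2^m * ρ^3)) := mul_le_mul_of_nonneg_left hsum hMpos.le
      _ = c * ρ^3 := by rw [hcdef]; ring
    linarith
  -- the square identity
  have hcoeffe : gA.coeff e = ∑ J ∈ A.powersetCard 2, ∏ j ∈ J, y j := by
    rw [hgA, Finset.prod_X_add_C_coeff _ _ (by rw [hcard]; omega)]
    congr 1
    rw [hcard]
    congr 1
    omega
  have hq2 : (∑ j ∈ A, y j)^2 = ∑ j ∈ A, (y j)^2 + 2 * gA.coeff e := by
    rw [sq_sum_pc2, hcoeffe]
  set S : ℝ := ∑ j ∈ A, (y j)^2 with hSdef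
  have hS0 : 0 ≤ S := Finset.sum_nonneg fun j _ => sq_nonneg _
  have hρS : ρ^2 ≤ S := by
    obtain ⟨jm, hjmA, hjm⟩ := Finset.exists_mem_eq_sup' hAne fun j => |y j|
    have h1 : ρ^2 = (y jm)^2 := by rw [hρdef, hjm, sq_abs]
    rw [h1, hSdef]
    exact Finset.single_le_sum (fun j _ => sq_nonneg (y j)) hjmA
  have hρ3 : ρ^3 ≤ ε * S := by
    calc ρ^3 = ρ * ρ^2 := by ring
    _ ≤ ε * S := mul_le_mul hρε hρS (by positivity) (hρ0.trans hρε)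
  have hce : 2 * c * ε ≤ 5/9 := by
    have h1 : ε * (2 * M * (m:ℝ) * 2^m) = 2 * c * ε := by rw [hcdef]; ring
    rw [← h1]
    exact hεC
  have hσ1 : ∑ j ∈ A, y j ≤ -β := by rw [← hnext]; exact hσ1β
  have h49 : (4/9) * S ≤ (∑ j ∈ A, y j)^2 := by
    have t2 : c * ρ^3 ≤ c * (ε * S) := mul_le_mul_of_nonneg_left hρ3 hc0
    have t4 : (2*c*ε) * S ≤ (5/9) * S := mul_le_mul_of_nonneg_right hce hS0
    nlinarith [hq2, hs2]
  have heq1 : (2/3) * Real.sqrt S = Real.sqrt ((4/9) * S) := by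
    rw [show (4/9 : ℝ) * S = (2/3)^2 * S by ring, Real.sqrt_mul (by positivity),
      Real.sqrt_sq (by norm_num)]
  have heq2 : Real.sqrt ((∑ j ∈ A, y j)^2) = -(∑ j ∈ A, y j) := by
    rw [Real.sqrt_sq_eq_abs]
    exact abs_of_nonpos (by linarith)
  rw [heq1, ← heq2]
  exact Real.sqrt_le_sqrt h49


section Geometry

variable {d m : ℕ}

lemma FacetRep.Pnonempty (R : FacetRep d m) : R.P.Nonempty :=
  R.fulldim.mono interior_subset

lemma FacetRep.bddAboveInner (R : FacetRep d m) (u : E d) :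
    BddAbove ((fun x => ⟪u, x⟫) '' R.P) :=
  (R.compact.image (Continuous.inner continuous_const continuous_id)).bddAbove

lemma FacetRep.inner_le_supp (R : FacetRep d m) (u : E d) {x : E d} (hx : x ∈ R.P) :
    ⟪u, x⟫ ≤ supp R.P u :=
  le_csSup (R.bddAboveInner u) ⟨x, hx, rfl⟩

lemma FacetRep.diam_pos (R : FacetRep d m) (hd : 2 ≤ d) : 0 < Metric.diam R.P := by
  obtain ⟨x, hx⟩ := R.fulldim
  obtain ⟨r, hr0, hball⟩ := Metric.isOpen_iff.mp isOpen_interior x hx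
  have hi0 : 0 < d := by omega
  set w : E d := EuclideanSpace.single (⟨0, hi0⟩ : Fin d) (r/2) with hw
  have hwn : ‖w‖ = r/2 := by
    rw [hw, EuclideanSpace.norm_single, Real.norm_eq_abs, abs_of_pos (by linarith)]
  have hxw : x + w ∈ R.P := by
    apply interior_subset
    apply hball
    rw [Metric.mem_ball, dist_eq_norm, add_sub_cancel_left, hwn]
    linarith
  have hx' : x ∈ R.P := interior_subset hx
  have h1 := Metric.dist_le_diam_of_mem R.compact.isBounded hxw hx'
  rw [dist_eq_norm, add_sub_cancel_left, hwn] at h1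
  linarith

lemma FacetRep.mem_iff (R : FacetRep d m) (x : E d) : x ∈ R.P ↔ ∀ j, 0 ≤ R.q x j := by
  conv_lhs => rw [R.rep]
  exact Iff.rfl

lemma FacetRep.q_sub (R : FacetRep d m) (x v : E d) (j : Fin m) :
    R.q x j - R.q v j = ⟪R.u j, v - x⟫ / Metric.diam R.P := by
  unfold FacetRep.q qf
  rw [inner_sub_right]
  ring

lemma FacetRep.q_diff_le (R : FacetRep d m) (hd : 2 ≤ d) (x v : E d) (j : Fin m) :
    |R.q x j - R.q v j| ≤ ‖x - v‖ / Metric.diam R.P := by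
  have hD := R.diam_pos hd
  rw [R.q_sub x v j, abs_div, abs_of_pos hD]
  have h1 : |⟪R.u j, v - x⟫| ≤ ‖x - v‖ := by
    calc |⟪R.u j, v - x⟫| ≤ ‖R.u j‖ * ‖v - x‖ := abs_real_inner_le_norm _ _
    _ = ‖x - v‖ := by rw [(R.facet j).1, one_mul, norm_sub_rev]
  exact div_le_div_of_nonneg_right h1 hD.le

lemma FacetRep.q_le_one (R : FacetRep d m) (hd : 2 ≤ d) {x : E d} (hx : x ∈ R.P) (j : Fin m) :
    R.q x j ≤ 1 := by
  have hD := R.diam_pos hd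
  show (supp R.P (R.u j) - ⟪R.u j, x⟫) / Metric.diam R.P ≤ 1
  rw [div_le_one hD]
  have h1 : supp R.P (R.u j) ≤ ⟪R.u j, x⟫ + Metric.diam R.P := by
    apply csSup_le (R.Pnonempty.image _)
    rintro b ⟨p, hp, rfl⟩
    have h2 : ⟪R.u j, p⟫ - ⟪R.u j, x⟫ = ⟪R.u j, p - x⟫ := (inner_sub_right _ _ _).symm
    have h3 : ⟪R.u j, p - x⟫ ≤ ‖p - x‖ := by
      calc ⟪R.u j, p - x⟫ ≤ |⟪R.u j, p - x⟫| := le_abs_self _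
      _ ≤ ‖R.u j‖ * ‖p - x‖ := abs_real_inner_le_norm _ _
      _ = ‖p - x‖ := by rw [(R.facet j).1, one_mul]
    have h4 : ‖p - x‖ ≤ Metric.diam R.P := by
      rw [← dist_eq_norm]
      exact Metric.dist_le_diam_of_mem R.compact.isBounded hp hx
    linarith
  linarith

lemma FacetRep.q_act (R : FacetRep d m) {v : E d} {j : Fin m} (hj : j ∈ R.act v) :
    R.q v j = 0 := (Finset.mem_filter.mp hj).2

lemma FacetRep.q_pos_of_not_act (R : FacetRep d m) {v : E d} (hv : v ∈ R.P) {j : Fin m}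
    (hj : j ∉ R.act v) : 0 < R.q v j := by
  have h1 : R.q v j ≠ 0 := by
    intro h
    exact hj (Finset.mem_filter.mpr ⟨Finset.mem_univ _, h⟩)
  exact lt_of_le_of_ne ((R.mem_iff v).mp hv j) (Ne.symm h1)

lemma FacetRep.span_act (R : FacetRep d m) (hd : 2 ≤ d) {v : E d} (hv : v ∈ vertices R.P)
    (w : E d) (hw : ∀ j ∈ R.act v, ⟪R.u j, w⟫ = 0) : w = 0 := by
  by_contra hw0
  have hvP : v ∈ R.P := hv.1
  have hD := R.diam_pos hd
  obtain ⟨t, ht0, ht⟩ : ∃ t : ℝ, 0 < t ∧ ∀ j ∉ R.act v,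
      t * ‖w‖ / Metric.diam R.P ≤ R.q v j := by
    rcases ((R.act v)ᶜ).eq_empty_or_nonempty with hse | hsne
    · refine ⟨1, one_pos, fun j hj => absurd (Finset.mem_compl.mpr hj) (by simp [hse])⟩
    · set c := ((R.act v)ᶜ).inf' hsne fun j => R.q v j with hc
      have hc0 : 0 < c := by
        rw [hc, Finset.lt_inf'_iff]
        exact fun j hj => R.q_pos_of_not_act hvP (Finset.mem_compl.mp hj)
      have hwn : 0 < ‖w‖ := norm_pos_iff.mpr hw0
      refine ⟨c * Metric.diam R.P / ‖w‖, by positivity, ?_⟩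
      intro j hj
      have h1 : c ≤ R.q v j := Finset.inf'_le _ (Finset.mem_compl.mpr hj)
      have h2 : c * Metric.diam R.P / ‖w‖ * ‖w‖ / Metric.diam R.P = c := by
        field_simp
      rw [h2]
      exact h1
  have hmem : ∀ σ : ℝ, |σ| = 1 → v + (σ * t) • w ∈ R.P := by
    intro σ hσ
    rw [R.mem_iff]
    intro j
    have hqz : R.q (v + (σ*t)•w) j = R.q v j - ⟪R.u j, (σ*t)•w⟫ / Metric.diam R.P := by
      have h := R.q_sub (v + (σ*t)•w) v j
      have h2 : v - (v + (σ*t)•w) = -((σ*t)•w) := by abel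
      rw [h2, inner_neg_right, neg_div] at h
      linarith
    rw [hqz]
    by_cases hj : j ∈ R.act v
    · rw [R.q_act hj]
      rw [real_inner_smul_right, hw j hj]
      simp
    · have h3 := ht j hj
      have h4 : ⟪R.u j, (σ*t)•w⟫ ≤ t * ‖w‖ := by
        calc ⟪R.u j, (σ*t)•w⟫ ≤ |⟪R.u j, (σ*t)•w⟫| := le_abs_self _
        _ = |σ| * |t| * |⟪R.u j, w⟫| := by
            rw [real_inner_smul_right, abs_mul, abs_mul]
        _ = t * |⟪R.u j, w⟫| := by rw [hσ, abs_of_pos ht0]; ring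
        _ ≤ t * (‖R.u j‖ * ‖w‖) :=
            mul_le_mul_of_nonneg_left (abs_real_inner_le_norm _ _) ht0.le
        _ = t * ‖w‖ := by rw [(R.facet j).1, one_mul]
      have h5 : ⟪R.u j, (σ*t)•w⟫ / Metric.diam R.P ≤ t * ‖w‖ / Metric.diam R.P :=
        div_le_div_of_nonneg_right h4 hD.le
      linarith
  have h1 := hmem 1 (by norm_num)
  have h2 := hmem (-1) (by norm_num)
  have hseg : v ∈ openSegment ℝ (v + ((-1) * t) • w) (v + (1 * t) • w) := by
    refine ⟨1/2, 1/2, by norm_num, by norm_num, by norm_num, ?_⟩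
    module
  obtain ⟨hA, hB⟩ := (mem_extremePoints.mp hv).2 _ h2 _ h1 hseg
  have h6 : (1 * t) • w = 0 := by
    have h7 : v + (1 * t) • w = v + 0 := by rw [add_zero]; exact hB
    exact add_left_cancel h7
  rw [one_mul] at h6
  rcases smul_eq_zero.mp h6 with h | h
  · exact absurd h (ne_of_gt ht0)
  · exact hw0 h

lemma FacetRep.exists_alpha (R : FacetRep d m) (hd : 2 ≤ d) {v : E d}
    (hv : v ∈ vertices R.P) :
    ∃ α : ℝ, 0 < α ∧ ∀ ε : ℝ, 0 ≤ ε → ∀ x : E d,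
      (∀ j ∈ R.act v, |R.q x j| ≤ ε) → ‖x - v‖ ≤ α * ε := by
  classical
  have hD := R.diam_pos hd
  set D := Metric.diam R.P with hDdef
  set T : E d →ₗ[ℝ] (Fin m → ℝ) :=
    LinearMap.pi (fun j => if j ∈ R.act v then ((innerSL ℝ (R.u j)).toLinearMap) else 0)
    with hT
  have hTapp : ∀ (z : E d) (j : Fin m),
      T z j = if j ∈ R.act v then ⟪R.u j, z⟫ else 0 := by
    intro z j
    rw [hT, LinearMap.pi_apply]
    by_cases hj : j ∈ R.act v <;> simp [hj]
  have hker : LinearMap.ker T = ⊥ := by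
    rw [LinearMap.ker_eq_bot']
    intro w hwT
    refine R.span_act hd hv w fun j hj => ?_
    have h1 := congrFun hwT j
    rw [hTapp, if_pos hj] at h1
    exact h1
  obtain ⟨K, hK0, hK⟩ := T.exists_antilipschitzWith hker
  refine ⟨(K : ℝ) * D, by positivity, ?_⟩
  intro ε hε x hx
  have h1 : ‖x - v‖ = dist x v := (dist_eq_norm x v).symm
  have h2 : dist x v ≤ (K : ℝ) * dist (T x) (T v) := hK.le_mul_dist x v
  have h3 : dist (T x) (T v) = ‖T (x - v)‖ := by
    rw [dist_eq_norm, ← map_sub]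
  have h4 : ‖T (x - v)‖ ≤ D * ε := by
    rw [pi_norm_le_iff_of_nonneg (by positivity)]
    intro j
    rw [hTapp]
    by_cases hj : j ∈ R.act v
    · rw [if_pos hj]
      have h5 : R.q x j - R.q v j = ⟪R.u j, v - x⟫ / D := R.q_sub x v j
      have h6 : R.q v j = 0 := R.q_act hj
      have h7 : ⟪R.u j, x - v⟫ = -(R.q x j) * D := by
        have h8 : ⟪R.u j, v - x⟫ = -⟪R.u j, x - v⟫ := by
          rw [← inner_neg_right, neg_sub]
        rw [h6, sub_zero, h8, neg_div] at h5
        have hD' : D ≠ 0 := ne_of_gt hD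
        rw [h5]
        field_simp
      rw [Real.norm_eq_abs, h7, abs_mul, abs_neg, abs_of_pos hD]
      calc |R.q x j| * D ≤ ε * D := mul_le_mul_of_nonneg_right (hx j hj) hD.le
      _ = D * ε := by ring
    · rw [if_neg hj]
      simp
      positivity
  calc ‖x - v‖ = dist x v := h1
  _ ≤ (K:ℝ) * dist (T x) (T v) := h2
  _ = (K:ℝ) * ‖T (x - v)‖ := by rw [h3]
  _ ≤ (K:ℝ) * (D * ε) := by
      exact mul_le_mul_of_nonneg_left h4 (by positivity)
  _ = (K:ℝ) * D * ε := by ring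

lemma FacetRep.vertices_finite (R : FacetRep d m) (hd : 2 ≤ d) :
    (vertices R.P).Finite := by
  classical
  have hinj : Set.InjOn (fun v => R.act v) (vertices R.P) := by
    intro v hv w hw h
    have hD := R.diam_pos hd
    have h1 : ∀ j ∈ R.act v, ⟪R.u j, v - w⟫ = 0 := by
      intro j hj
      have hqv : R.q v j = 0 := R.q_act hj
      have h' : R.act v = R.act w := h
      have hqw : R.q w j = 0 := R.q_act (h' ▸ hj)
      have h2 := R.q_sub w v j
      rw [hqv, hqw] at h2
      have h3 : ⟪R.u j, v - w⟫ / Metric.diam R.P = 0 := by linarith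
      rcases div_eq_zero_iff.mp h3 with h4 | h4
      · exact h4
      · exact absurd h4 (ne_of_gt hD)
    have h5 := R.span_act hd hv (v - w) h1
    exact sub_eq_zero.mp h5
  exact Set.Finite.of_finite_image (Set.toFinite _) hinj


lemma FacetRep.main_v {d m : ℕ} (hd : 2 ≤ d) (R : FacetRep d m) (hs : R.Simple)
    {v : E d} (hv : v ∈ vertices R.P) :
    ∃ ε : ℝ, 0 < ε ∧
      {x ∈ R.Piv v ε | ∀ i, m - d + 2 ≤ i → i ≤ m → 0 ≤ esymm (R.q x) i}
        ⊆ R.P ∪ R.Cv v := by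
  classical
  have hvP : v ∈ R.P := hv.1
  have hD := R.diam_pos hd
  have hcard : (R.act v).card = d := hs v hv
  have hdm : d ≤ m := by rw [← hcard]; simpa using (R.act v).card_le_univ
  have hm0 : 0 < (m:ℝ) := by
    have : 0 < m := by omega
    exact_mod_cast this
  obtain ⟨α, hα0, hα⟩ := R.exists_alpha hd hv
  obtain ⟨δv, hδv0, hδv1, hδvle⟩ : ∃ δv : ℝ, 0 < δv ∧ δv ≤ 1 ∧
      ∀ j ∉ R.act v, δv ≤ R.q v j := by
    rcases ((R.act v)ᶜ).eq_empty_or_nonempty with hse | hsne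
    · exact ⟨1, one_pos, le_refl 1,
        fun j hj => absurd (Finset.mem_compl.mpr hj) (by simp [hse])⟩
    · obtain ⟨j1, hj1⟩ := hsne
      refine ⟨((R.act v)ᶜ).inf' ⟨j1, hj1⟩ fun j => R.q v j, ?_, ?_, ?_⟩
      · refine (Finset.lt_inf'_iff _).mpr ?_
        exact fun j hj => R.q_pos_of_not_act hvP (Finset.mem_compl.mp hj)
      · exact le_trans (Finset.inf'_le _ hj1) (R.q_le_one hd hvP j1)
      · exact fun j hj => Finset.inf'_le _ (Finset.mem_compl.mpr hj)
  set δ : ℝ := δv / 2 with hδdef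
  have hδ0 : 0 < δ := by positivity
  have hδhalf : δ ≤ 1/2 := by rw [hδdef]; linarith
  set M : ℝ := (4:ℝ)^m / δ^m with hMdef
  have hM0 : 0 < M := by positivity
  set C2 : ℝ := 2 * ((4:ℝ)^m / δ^m) * m * 2^m with hC2def
  have hC20 : 0 < C2 := by rw [hC2def]; positivity
  set κ : ℝ := α / Metric.diam R.P + 1 with hκdef
  have hκ0 : 0 < κ := by positivity
  set ε : ℝ := min (min 1 (δ / κ)) (min (1 / (M * (d+1))) ((5/9) / (C2+1))) with hεdef
  have hε0 : 0 < ε := by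
    refine lt_min (lt_min one_pos (by positivity)) (lt_min (by positivity) (by positivity))
  have hε1 : ε ≤ 1 := le_trans (min_le_left _ _) (min_le_left _ _)
  have hεκ : κ * ε ≤ δ := by
    have h1 : ε ≤ δ / κ := le_trans (min_le_left _ _) (min_le_right _ _)
    calc κ * ε ≤ κ * (δ / κ) := mul_le_mul_of_nonneg_left h1 hκ0.le
    _ = δ := by field_simp
  have hεM : ε * ((4:ℝ)^m / δ^m) * (d+1) ≤ 1 := by
    have h1 : ε ≤ 1 / (M * (d+1)) := le_trans (min_le_right _ _) (min_le_left _ _)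
    have h2 : 0 < M * ((d:ℝ)+1) := by positivity
    calc ε * ((4:ℝ)^m / δ^m) * (d+1) = ε * (M * ((d:ℝ)+1)) := by rw [hMdef]; ring
    _ ≤ (1 / (M * (d+1))) * (M * ((d:ℝ)+1)) := mul_le_mul_of_nonneg_right h1 h2.le
    _ = 1 := by field_simp
  have hεC : ε * (2 * ((4:ℝ)^m / δ^m) * m * 2^m) ≤ 5/9 := by
    have h1 : ε ≤ (5/9) / (C2+1) := le_trans (min_le_right _ _) (min_le_right _ _)
    calc ε * (2 * ((4:ℝ)^m / δ^m) * m * 2^m) = ε * C2 := by rw [hC2def]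
    _ ≤ ((5/9) / (C2+1)) * C2 := mul_le_mul_of_nonneg_right h1 hC20.le
    _ ≤ 5/9 := by
        rw [div_mul_eq_mul_div, div_le_iff₀ (by positivity)]
        nlinarith [hC20]
  refine ⟨ε, hε0, ?_⟩
  rintro x ⟨hxPiv, hxcond⟩
  have hxPiv' : ∀ j ∈ R.act v, |R.q x j| ≤ ε := hxPiv
  have hxv : ‖x - v‖ ≤ α * ε := hα ε hε0.le x hxPiv'
  have hinact : ∀ j, j ∉ R.act v → δ ≤ R.q x j ∧ R.q x j ≤ 2 := by
    intro j hj
    have hdiff := R.q_diff_le hd x v j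
    have h2 : ‖x - v‖ / Metric.diam R.P ≤ α / Metric.diam R.P * ε := by
      rw [div_mul_eq_mul_div]
      exact div_le_div_of_nonneg_right hxv hD.le
    have h3 : α / Metric.diam R.P * ε ≤ κ * ε :=
      mul_le_mul_of_nonneg_right (by rw [hκdef]; linarith) hε0.le
    have h4 : |R.q x j - R.q v j| ≤ δ := le_trans hdiff (le_trans h2 (h3.trans hεκ))
    have h5 := hδvle j hj
    have h6 := abs_le.mp h4
    constructor
    · have : δv - δ = δ := by rw [hδdef]; ring
      linarith [h6.1]
    · have h7 := R.q_le_one hd hvP j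
      linarith [h6.2, hδhalf]
  by_cases hP : ∀ j ∈ R.act v, 0 ≤ R.q x j
  · left
    rw [R.mem_iff]
    intro j
    by_cases hj : j ∈ R.act v
    · exact hP j hj
    · linarith [(hinact j hj).1]
  · right
    push_neg at hP
    obtain ⟨j0, hj0, hj0neg⟩ := hP
    have hcore := core hd (R.q x) (R.act v) hcard δ ε hδ0 hδhalf hinact hxPiv'
      hxcond ⟨j0, hj0, hj0neg⟩ hε1 hεM hεC
    exact hcore

end Geometry

end Aux

theorem statement5 (d m : ℕ) (hd : 2 ≤ d) (R : FacetRep d m) (hs : R.Simple) :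
    ∃ ε₂ > (0 : ℝ), ∀ v ∈ vertices R.P,
      {x ∈ R.Piv v ε₂ | ∀ i, m - d + 2 ≤ i → i ≤ m → 0 ≤ esymm (R.q x) i}
        ⊆ R.P ∪ R.Cv v := by
  classical
  rcases (vertices R.P).eq_empty_or_nonempty with hve | hvne
  · refine ⟨1, one_pos, ?_⟩
    intro v hv
    rw [hve] at hv
    exact absurd hv (Set.notMem_empty v)
  · have hfin := R.vertices_finite hd
    set V := hfin.toFinset with hV
    have hVne : V.Nonempty := by
      rw [hV, Set.Finite.toFinset_nonempty]
      exact hvne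
    have hch : ∀ v : E d, ∃ ε : ℝ, 0 < ε ∧ (v ∈ vertices R.P →
        {x ∈ R.Piv v ε | ∀ i, m - d + 2 ≤ i → i ≤ m → 0 ≤ esymm (R.q x) i}
          ⊆ R.P ∪ R.Cv v) := by
      intro v
      by_cases hv : v ∈ vertices R.P
      · obtain ⟨ε, hε0, hsub⟩ := FacetRep.main_v hd R hs hv
        exact ⟨ε, hε0, fun _ => hsub⟩
      · exact ⟨1, one_pos, fun h => absurd h hv⟩
    choose F hF0 hFsub using hch
    refine ⟨V.inf' hVne F, ?_, ?_⟩
    · rw [gt_iff_lt, Finset.lt_inf'_iff]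
      exact fun v _ => hF0 v
    · intro v hv
      have hvV : v ∈ V := hfin.mem_toFinset.mpr hv
      have hle : V.inf' hVne F ≤ F v := Finset.inf'_le _ hvV
      intro x hx
      refine hFsub v hv ⟨?_, hx.2⟩
      intro j hj
      exact (hx.1 j hj).trans hle

end AverkovHenk
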